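/- Let t ≥ 1, let N = [[3, 1], [0, 1]], N' = [[0, 1], [0, 1]], and M = [[3, 0], [0, 1]] as 2×2 rational matrices. Then for all natural numbers m₁, …, m_t: N·M^{m₁}·N·M^{m₂}·N ⋯ N·M^{m_t}·N' = [[0, E], [0, 1]] where E = 3^{m₁+⋯+m_t+t} + 3^{m₁+⋯+m_{t-1}+t-1} + ⋯ + 3^{m₁+m₂+2} + 3^{m₁+1} + 1 (that is, E = 1 + ∑_{j=1}^{t} 3^{j + m₁ + ⋯ + m_j}). Consequently, the map ℕ^t → Matrix (Fin 2) (Fin 2) ℚ sending (m₁, …, m_t) to this product is injective, even though N' is singular. -/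

import Mathlib

private def fval : List ℕ → ℕ
  | [] => 1
  | a :: L => 3 ^ (a + 1) * fval L + 1

private lemma fval_mod (L : List ℕ) : fval L % 3 = 1 := by
  cases L with
  | nil => rfl
  | cons a L =>
    show (3 ^ (a + 1) * fval L + 1) % 3 = 1
    have : 3 ∣ 3 ^ (a + 1) * fval L := ⟨3 ^ a * fval L, by ring⟩
    omega

private lemma fval_pos (L : List ℕ) : 0 < fval L := by
  cases L with
  | nil => simp [fval]
  | cons a L => simp [fval]

private lemma fval_inj : ∀ L L' : List ℕ, L.length = L'.length → fval L = fval L' → L = L' := by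
  intro L
  induction L with
  | nil => intro L' h _; cases L' <;> simp_all
  | cons a L ih =>
    intro L' h hf
    cases L' with
    | nil => simp at h
    | cons b L' =>
      simp only [fval, Nat.add_right_cancel_iff] at hf
      have hab : a = b := by
        by_contra hne
        rcases Nat.lt_or_ge a b with hlt | hge
        · have : 3 ^ (a + 1) * ((3 : ℕ) ^ (b - a) * fval L') = 3 ^ (a + 1) * fval L := by
            rw [← mul_assoc, ← pow_add]
            have : a + 1 + (b - a) = b + 1 := by omega
            rw [this, hf]
          have h2 : fval L = 3 ^ (b - a) * fval L' := (Nat.eq_of_mul_eq_mul_left (by positivity) this).symm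
          have h3 : 3 ∣ fval L := by
            rw [h2]
            exact Dvd.dvd.mul_right (dvd_pow_self 3 (by omega)) _
          have := fval_mod L; omega
        · have hlt : b < a := by omega
          have : 3 ^ (b + 1) * ((3 : ℕ) ^ (a - b) * fval L) = 3 ^ (b + 1) * fval L' := by
            rw [← mul_assoc, ← pow_add]
            have : b + 1 + (a - b) = a + 1 := by omega
            rw [this, hf]
          have h2 : fval L' = 3 ^ (a - b) * fval L := (Nat.eq_of_mul_eq_mul_left (by positivity) this).symm
          have h3 : 3 ∣ fval L' := by
            rw [h2]
            exact Dvd.dvd.mul_right (dvd_pow_self 3 (by omega)) _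
          have := fval_mod L'; omega
      subst hab
      have : fval L = fval L' := Nat.eq_of_mul_eq_mul_left (by positivity) hf
      simp only [List.length_cons, Nat.add_right_cancel_iff] at h
      rw [ih L' h this]

private lemma Mpow (a : ℕ) : (!![3, 0; 0, 1] : Matrix (Fin 2) (Fin 2) ℚ) ^ a = !![(3:ℚ) ^ a, 0; 0, 1] := by
  induction a with
  | zero => simp [Matrix.one_fin_two]
  | succ n ih =>
    rw [pow_succ, ih]
    norm_num [Matrix.mul_fin_two, pow_succ]

private lemma prod_eq (L : List ℕ) :
    ((L.map fun a => (!![3, 1; 0, 1] : Matrix (Fin 2) (Fin 2) ℚ) * !![3, 0; 0, 1] ^ a).prod)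
      * !![0, 1; 0, 1] = !![0, (fval L : ℚ); 0, 1] := by
  induction L with
  | nil => simp [fval]
  | cons a L ih =>
    rw [List.map_cons, List.prod_cons, mul_assoc, ih, Mpow]
    show _ = !![0, ((3 ^ (a + 1) * fval L + 1 : ℕ) : ℚ); 0, 1]
    push_cast
    norm_num [Matrix.mul_fin_two, pow_succ]
    ring_nf
    simp

private lemma Iic_succ_fin (t : ℕ) (k : Fin t) :
    Finset.Iic k.succ = insert (0 : Fin (t+1)) ((Finset.Iic k).map (Fin.succEmb t)) := by
  ext i
  induction i using Fin.cases with
  | zero => simp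
  | succ j => simp [Fin.succ_le_succ_iff, Fin.succ_ne_zero, Fin.succ_inj]

private lemma E_eq : ∀ (t : ℕ) (m : Fin t → ℕ),
    (fval (List.ofFn m) : ℚ)
      = 1 + ∑ j : Fin t, (3 : ℚ) ^ ((j : ℕ) + 1 + ∑ i ∈ Finset.Iic j, m i) := by
  intro t
  induction t with
  | zero => intro m; simp [fval]
  | succ n ih =>
    intro m
    rw [List.ofFn_succ]
    show ((3 ^ (m 0 + 1) * fval (List.ofFn fun i => m i.succ) + 1 : ℕ) : ℚ) = _
    push_cast
    rw [ih fun i => m i.succ, Fin.sum_univ_succ]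
    have h0 : ∑ i ∈ Finset.Iic (0 : Fin (n+1)), m i = m 0 := by
      rw [show Finset.Iic (0 : Fin (n+1)) = {0} from by ext i; simp [Fin.le_zero_iff],
        Finset.sum_singleton]
    rw [h0]
    have hterm : ∀ j : Fin n, ((j.succ : ℕ) + 1 + ∑ i ∈ Finset.Iic j.succ, m i)
        = (m 0 + 1) + ((j : ℕ) + 1 + ∑ i ∈ Finset.Iic j, m (Fin.succ i)) := by
      intro j
      rw [Iic_succ_fin, Finset.sum_insert (by simp [Fin.succ_ne_zero]), Finset.sum_map]
      simp only [Fin.val_succ, Fin.coe_succEmb]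
      omega
    have hsum : ∑ j : Fin n, (3:ℚ) ^ ((j.succ : ℕ) + 1 + ∑ i ∈ Finset.Iic j.succ, m i)
        = ∑ j : Fin n, (3:ℚ) ^ (m 0 + 1) * 3 ^ ((j : ℕ) + 1 + ∑ i ∈ Finset.Iic j, m i.succ) :=
      Finset.sum_congr rfl fun j _ => by rw [hterm j, pow_add]
    rw [hsum, ← Finset.mul_sum]
    simp only [Fin.val_zero]
    ring

theorem singular_example (t : ℕ) (ht : 1 ≤ t) (N N' M : Matrix (Fin 2) (Fin 2) ℚ)
    (hN : N = !![3, 1; 0, 1]) (hN' : N' = !![0, 1; 0, 1]) (hM : M = !![3, 0; 0, 1]) :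
    (∀ m : Fin t → ℕ,
        (List.ofFn (fun i : Fin t => N * M ^ m i)).prod * N' =
          !![0, 1 + ∑ j : Fin t, (3 : ℚ) ^ ((j : ℕ) + 1 + ∑ i ∈ Finset.Iic j, m i); 0, 1]) ∧
      Function.Injective
        (fun m : Fin t → ℕ => (List.ofFn (fun i : Fin t => N * M ^ m i)).prod * N') := by
  subst hN hN' hM
  have key : ∀ m : Fin t → ℕ,
      (List.ofFn (fun i : Fin t => (!![3,1;0,1] : Matrix (Fin 2) (Fin 2) ℚ) * !![3,0;0,1] ^ m i)).prod
        * !![0,1;0,1] = !![0, (fval (List.ofFn m) : ℚ); 0, 1] := by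
    intro m
    have := prod_eq (List.ofFn m)
    rwa [List.map_ofFn] at this
  constructor
  · intro m
    rw [key m, E_eq]
  · intro m m' h
    simp only at h
    rw [key m, key m'] at h
    have h2 : (fval (List.ofFn m) : ℚ) = fval (List.ofFn m') := by
      have := congrFun (congrFun h 0) 1
      simpa using this
    have h3 : fval (List.ofFn m) = fval (List.ofFn m') := by exact_mod_cast h2
    have h4 := fval_inj _ _ (by simp) h3
    exact List.ofFn_inj.mp h4
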